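/- Failure of the strong comparison principle on the half-plane: Let Ω = {(x₁,x₂) ∈ ℝ² : x₁ > 0} with f ≡ 0 and g ≡ 0. The function u ≡ 0 on Ω̄ is a viscosity subsolution of the generalized Dirichlet problem, the function v defined by v(x) = 0 for x ∈ Ω and v(x) = −1 for x ∈ ∂Ω is a viscosity supersolution, and u(x₀) = 0 > −1 = v(x₀) for every x₀ ∈ ∂Ω; hence there exist a viscosity subsolution u and a viscosity supersolution v of the generalized Dirichlet problem with u(x₀) > v(x₀) at some point of Ω̄. -/

import Mathlib

open scoped RealInnerProductSpace Classical

/-- `det⁺(X) = det X` if `X` is positive semidefinite, and `-1` otherwise. -/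
noncomputable def detPlus {n : ℕ} (X : Matrix (Fin n) (Fin n) ℝ) : ℝ :=
  if X.PosSemidef then X.det else -1

/-- The Hessian matrix of `φ : ℝⁿ → ℝ` at `x`, given by the second iterated derivative. -/
noncomputable def hessianMatrix {n : ℕ} (φ : EuclideanSpace ℝ (Fin n) → ℝ)
    (x : EuclideanSpace ℝ (Fin n)) : Matrix (Fin n) (Fin n) ℝ :=
  Matrix.of fun i j =>
    iteratedFDeriv ℝ 2 φ x ![EuclideanSpace.single i 1, EuclideanSpace.single j 1]

/-- Lower envelope `F_*` of the generalized Dirichlet Monge–Ampère operator. -/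
noncomputable def MALower {n : ℕ} (Ω : Set (EuclideanSpace ℝ (Fin n)))
    (f : EuclideanSpace ℝ (Fin n) → ℝ → EuclideanSpace ℝ (Fin n) → ℝ)
    (g : EuclideanSpace ℝ (Fin n) → ℝ)
    (x : EuclideanSpace ℝ (Fin n)) (u : ℝ) (p : EuclideanSpace ℝ (Fin n))
    (X : Matrix (Fin n) (Fin n) ℝ) : ℝ :=
  if x ∈ Ω then -detPlus X + f x u p
  else min (u - g x) (-detPlus X + f x u p)

/-- Upper envelope `F^*` of the generalized Dirichlet Monge–Ampère operator. -/
noncomputable def MAUpper {n : ℕ} (Ω : Set (EuclideanSpace ℝ (Fin n)))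
    (f : EuclideanSpace ℝ (Fin n) → ℝ → EuclideanSpace ℝ (Fin n) → ℝ)
    (g : EuclideanSpace ℝ (Fin n) → ℝ)
    (x : EuclideanSpace ℝ (Fin n)) (u : ℝ) (p : EuclideanSpace ℝ (Fin n))
    (X : Matrix (Fin n) (Fin n) ℝ) : ℝ :=
  if x ∈ Ω then -detPlus X + f x u p
  else max (u - g x) (-detPlus X + f x u p)

/-- Viscosity subsolution of the generalized Dirichlet problem on `closure Ω`. -/
def IsViscositySubsolution {n : ℕ} (Ω : Set (EuclideanSpace ℝ (Fin n)))
    (f : EuclideanSpace ℝ (Fin n) → ℝ → EuclideanSpace ℝ (Fin n) → ℝ)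
    (g : EuclideanSpace ℝ (Fin n) → ℝ)
    (v : EuclideanSpace ℝ (Fin n) → ℝ) : Prop :=
  UpperSemicontinuousOn v (closure Ω) ∧
  ∀ φ : EuclideanSpace ℝ (Fin n) → ℝ, ContDiff ℝ 2 φ →
    ∀ x₀ ∈ closure Ω, IsLocalMaxOn (fun x => v x - φ x) (closure Ω) x₀ →
      MALower Ω f g x₀ (v x₀) (gradient φ x₀) (hessianMatrix φ x₀) ≤ 0

/-- Viscosity supersolution of the generalized Dirichlet problem on `closure Ω`. -/
def IsViscositySupersolution {n : ℕ} (Ω : Set (EuclideanSpace ℝ (Fin n)))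
    (f : EuclideanSpace ℝ (Fin n) → ℝ → EuclideanSpace ℝ (Fin n) → ℝ)
    (g : EuclideanSpace ℝ (Fin n) → ℝ)
    (w : EuclideanSpace ℝ (Fin n) → ℝ) : Prop :=
  LowerSemicontinuousOn w (closure Ω) ∧
  ∀ φ : EuclideanSpace ℝ (Fin n) → ℝ, ContDiff ℝ 2 φ →
    ∀ x₀ ∈ closure Ω, IsLocalMinOn (fun x => w x - φ x) (closure Ω) x₀ →
      0 ≤ MAUpper Ω f g x₀ (w x₀) (gradient φ x₀) (hessianMatrix φ x₀)

/-- A bounded open convex set is uniformly convex if every supporting hyperplane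
separates quadratically. -/
def UniformlyConvexDomain {n : ℕ} (Ω : Set (EuclideanSpace ℝ (Fin n))) : Prop :=
  ∀ x₀ ∈ frontier Ω, ∀ ν : EuclideanSpace ℝ (Fin n), ‖ν‖ = 1 →
    (∀ x ∈ closure Ω, ⟪ν, x - x₀⟫ ≤ 0) →
    ∃ α > 0, ∀ x ∈ closure Ω, ⟪ν, x - x₀⟫ ≤ -α * ‖x - x₀‖ ^ 2

section AuxLemmas

open Filter Topology

variable {φ : EuclideanSpace ℝ (Fin 2) → ℝ}

/-- 1D second-derivative test at a local minimum. -/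
private lemma oneD_min {g : ℝ → ℝ} (hg : ∀ t, DifferentiableAt ℝ g t)
    (hmin : IsLocalMin g 0) {c : ℝ} (hc : HasDerivAt (deriv g) c 0) : 0 ≤ c := by
  by_contra hlt
  push_neg at hlt
  have h0 : deriv g 0 = 0 := hmin.deriv_eq_zero
  have hslope : Tendsto (slope (deriv g) 0) (𝓝[≠] 0) (𝓝 c) :=
    hasDerivAt_iff_tendsto_slope.1 hc
  have hev : ∀ᶠ t in 𝓝[≠] (0:ℝ), slope (deriv g) 0 t < c / 2 :=
    hslope.eventually_lt_const (by linarith)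
  rw [eventually_nhdsWithin_iff, Metric.eventually_nhds_iff] at hev
  obtain ⟨ε, hε, hev⟩ := hev
  obtain ⟨ε₂, hε₂, hmin'⟩ := Metric.eventually_nhds_iff.1 hmin
  set δ := min ε ε₂ / 2 with hδ
  have hδpos : 0 < δ := by positivity
  have hderiv_neg : ∀ t ∈ Set.Ioo (0:ℝ) δ, deriv g t < 0 := by
    intro t ht
    have h1 : dist t 0 < ε := by
      rw [Real.dist_eq, sub_zero, abs_of_pos ht.1]
      have hm := min_le_left ε ε₂
      have : δ ≤ ε / 2 := by rw [hδ]; linarith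
      nlinarith [ht.2]
    have hs := hev h1 (by simp [ne_of_gt ht.1] : t ∈ ({0}ᶜ : Set ℝ))
    rw [slope_def_field, h0] at hs
    have : (deriv g t - 0) / (t - 0) < c / 2 := by
      simpa [div_eq_inv_mul] using hs
    rw [sub_zero, sub_zero, div_lt_iff₀ ht.1] at this
    nlinarith [ht.1]
  have hanti : StrictAntiOn g (Set.Icc 0 δ) := by
    apply strictAntiOn_of_deriv_neg (convex_Icc 0 δ)
    · exact fun t _ => (hg t).continuousAt.continuousWithinAt
    · intro t ht
      rw [interior_Icc] at ht
      exact hderiv_neg t ht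
  have h1 : g δ < g 0 := hanti (Set.left_mem_Icc.2 hδpos.le) (Set.right_mem_Icc.2 hδpos.le) hδpos
  have h2 : g 0 ≤ g δ := by
    apply hmin'
    rw [Real.dist_eq, sub_zero, abs_of_pos hδpos]
    have hm := min_le_right ε ε₂
    have : δ ≤ ε₂ / 2 := by rw [hδ]; linarith
    linarith
  linarith

/-- 1D second-derivative test at a local maximum. -/
private lemma oneD_max {g : ℝ → ℝ} (hg : ∀ t, DifferentiableAt ℝ g t)
    (hmax : IsLocalMax g 0) {c : ℝ} (hc : HasDerivAt (deriv g) c 0) : c ≤ 0 := by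
  have hneg : ∀ t, DifferentiableAt ℝ (fun s => -g s) t := fun t => (hg t).neg
  have hmin : IsLocalMin (fun s => -g s) 0 := hmax.neg
  have hd : deriv (fun s => -g s) = fun s => -deriv g s := by
    funext s; exact deriv.neg
  have hc' : HasDerivAt (deriv (fun s => -g s)) (-c) 0 := by
    rw [hd]; exact hc.neg
  have := oneD_min hneg hmin hc'
  linarith

private lemma line_hasDerivAt (hφ : ContDiff ℝ 2 φ) (x₀ v : EuclideanSpace ℝ (Fin 2)) :
    (∀ t : ℝ, HasDerivAt (fun t : ℝ => φ (x₀ + t • v)) (fderiv ℝ φ (x₀ + t • v) v) t) ∧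
    HasDerivAt (fun t : ℝ => fderiv ℝ φ (x₀ + t • v) v) (fderiv ℝ (fderiv ℝ φ) x₀ v v) 0 := by
  have hL : ∀ t : ℝ, HasDerivAt (fun t : ℝ => x₀ + t • v) v t := by
    intro t
    simpa using ((hasDerivAt_id t).smul_const v).const_add x₀
  constructor
  · intro t
    exact ((hφ.differentiable two_ne_zero) _).hasFDerivAt.comp_hasDerivAt t (hL t)
  · have hf' : ContDiff ℝ 1 (fderiv ℝ φ) := hφ.fderiv_right (le_refl _)
    have h2 : HasFDerivAt (fderiv ℝ φ) (fderiv ℝ (fderiv ℝ φ) x₀) (x₀ + (0:ℝ) • v) := by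
      simpa using ((hf'.differentiable one_ne_zero) x₀).hasFDerivAt
    have hc1 : HasDerivAt (fun t : ℝ => fderiv ℝ φ (x₀ + t • v))
        (fderiv ℝ (fderiv ℝ φ) x₀ v) 0 := h2.comp_hasDerivAt 0 (hL 0)
    have := ((ContinuousLinearMap.apply ℝ ℝ v).hasFDerivAt).comp_hasDerivAt 0 hc1
    exact this

private lemma key_min (hφ : ContDiff ℝ 2 φ) {x₀ : EuclideanSpace ℝ (Fin 2)}
    (v : EuclideanSpace ℝ (Fin 2))
    (h : IsLocalMin (fun t : ℝ => φ (x₀ + t • v)) 0) :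
    0 ≤ fderiv ℝ (fderiv ℝ φ) x₀ v v := by
  obtain ⟨h1, h2⟩ := line_hasDerivAt hφ x₀ v
  have hdg : deriv (fun t : ℝ => φ (x₀ + t • v)) = fun t => fderiv ℝ φ (x₀ + t • v) v :=
    funext fun t => (h1 t).deriv
  exact oneD_min (fun t => (h1 t).differentiableAt) h (hdg ▸ h2)

private lemma key_max (hφ : ContDiff ℝ 2 φ) {x₀ : EuclideanSpace ℝ (Fin 2)}
    (v : EuclideanSpace ℝ (Fin 2))
    (h : IsLocalMax (fun t : ℝ => φ (x₀ + t • v)) 0) :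
    fderiv ℝ (fderiv ℝ φ) x₀ v v ≤ 0 := by
  obtain ⟨h1, h2⟩ := line_hasDerivAt hφ x₀ v
  have hdg : deriv (fun t : ℝ => φ (x₀ + t • v)) = fun t => fderiv ℝ φ (x₀ + t • v) v :=
    funext fun t => (h1 t).deriv
  exact oneD_max (fun t => (h1 t).differentiableAt) h (hdg ▸ h2)

private lemma hessian_apply (x : EuclideanSpace ℝ (Fin 2)) (i j : Fin 2) :
    hessianMatrix φ x i j =
      fderiv ℝ (fderiv ℝ φ) x (EuclideanSpace.single i 1) (EuclideanSpace.single j 1) := by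
  simp [hessianMatrix, iteratedFDeriv_two_apply]

private lemma hessian_symm (hφ : ContDiff ℝ 2 φ) (x v w : EuclideanSpace ℝ (Fin 2)) :
    fderiv ℝ (fderiv ℝ φ) x v w = fderiv ℝ (fderiv ℝ φ) x w v :=
  second_derivative_symmetric (fun y => ((hφ.differentiable two_ne_zero) y).hasFDerivAt)
    (((hφ.fderiv_right (m := 1) (le_refl _)).differentiable one_ne_zero) x).hasFDerivAt v w

private lemma line_min {x₀ : EuclideanSpace ℝ (Fin 2)} (h : IsLocalMin φ x₀)
    (v : EuclideanSpace ℝ (Fin 2)) : IsLocalMin (fun t : ℝ => φ (x₀ + t • v)) 0 := by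
  have hcont : Continuous (fun t : ℝ => x₀ + t • v) := by continuity
  have htt : Filter.Tendsto (fun t : ℝ => x₀ + t • v) (𝓝 0) (𝓝 x₀) := by
    have := hcont.tendsto 0
    simpa using this
  have hev := htt.eventually h
  filter_upwards [hev] with t ht
  simpa using ht

private lemma line_max {x₀ : EuclideanSpace ℝ (Fin 2)} (h : IsLocalMax φ x₀)
    (v : EuclideanSpace ℝ (Fin 2)) : IsLocalMax (fun t : ℝ => φ (x₀ + t • v)) 0 := by
  have hcont : Continuous (fun t : ℝ => x₀ + t • v) := by continuity
  have htt : Filter.Tendsto (fun t : ℝ => x₀ + t • v) (𝓝 0) (𝓝 x₀) := by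
    have := hcont.tendsto 0
    simpa using this
  have hev := htt.eventually h
  filter_upwards [hev] with t ht
  simpa using ht

private lemma hessian_posSemidef (hφ : ContDiff ℝ 2 φ) {x₀ : EuclideanSpace ℝ (Fin 2)}
    (h : IsLocalMin φ x₀) : (hessianMatrix φ x₀).PosSemidef := by
  refine Matrix.posSemidef_iff_dotProduct_mulVec.mpr ⟨?_, ?_⟩
  · apply Matrix.ext
    intro i j
    simp only [Matrix.conjTranspose_apply, star_trivial]
    rw [hessian_apply, hessian_apply, hessian_symm hφ]
  · intro y
    set e₀ : EuclideanSpace ℝ (Fin 2) := EuclideanSpace.single 0 1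
    set e₁ : EuclideanSpace ℝ (Fin 2) := EuclideanSpace.single 1 1
    set w : EuclideanSpace ℝ (Fin 2) := y 0 • e₀ + y 1 • e₁ with hw
    have hq : 0 ≤ fderiv ℝ (fderiv ℝ φ) x₀ w w := key_min hφ w (line_min h w)
    have hexp : fderiv ℝ (fderiv ℝ φ) x₀ w w =
        y 0 * y 0 * fderiv ℝ (fderiv ℝ φ) x₀ e₀ e₀ +
        y 0 * y 1 * fderiv ℝ (fderiv ℝ φ) x₀ e₀ e₁ +
        y 1 * y 0 * fderiv ℝ (fderiv ℝ φ) x₀ e₁ e₀ +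
        y 1 * y 1 * fderiv ℝ (fderiv ℝ φ) x₀ e₁ e₁ := by
      rw [hw]
      simp only [map_add, map_smul, ContinuousLinearMap.add_apply,
        ContinuousLinearMap.smul_apply, smul_eq_mul]
      ring
    rw [hexp] at hq
    have h00 := hessian_apply (φ := φ) x₀ 0 0
    have h01 := hessian_apply (φ := φ) x₀ 0 1
    have h10 := hessian_apply (φ := φ) x₀ 1 0
    have h11 := hessian_apply (φ := φ) x₀ 1 1
    simp only [star_trivial, dotProduct, Matrix.mulVec, Fin.sum_univ_two]
    rw [← h00, ← h01, ← h10, ← h11] at hq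
    convert hq using 1
    · rfl
    · ring

private lemma psd_det_nonneg {M : Matrix (Fin 2) (Fin 2) ℝ} (h : M.PosSemidef) :
    0 ≤ M.det := by
  rw [h.1.det_eq_prod_eigenvalues]
  apply Finset.prod_nonneg
  intro i _
  exact_mod_cast h.eigenvalues_nonneg i

private lemma psd_diag_nonneg {M : Matrix (Fin 2) (Fin 2) ℝ} (h : M.PosSemidef) :
    0 ≤ M 1 1 := by
  have := h.dotProduct_mulVec_nonneg (fun j => if j = 1 then 1 else 0)
  simpa [dotProduct, Matrix.mulVec, Fin.sum_univ_two] using this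

private lemma det_nonpos_of_diag {M : Matrix (Fin 2) (Fin 2) ℝ} (h : M.PosSemidef)
    (h11 : M 1 1 ≤ 0) : M.det ≤ 0 := by
  have hd := psd_diag_nonneg h
  have h0 : M 1 1 = 0 := le_antisymm h11 hd
  have h10 : M 1 0 = M 0 1 := by
    have := congrArg (fun N : Matrix (Fin 2) (Fin 2) ℝ => N 0 1) h.1
    simpa [Matrix.conjTranspose_apply] using this
  rw [Matrix.det_fin_two, h0, h10]
  nlinarith [sq_nonneg (M 0 1)]

private lemma omega_open : IsOpen {x : EuclideanSpace ℝ (Fin 2) | 0 < x 0} :=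
  isOpen_lt continuous_const (EuclideanSpace.proj (0 : Fin 2)).continuous

private lemma omega_closure :
    closure {x : EuclideanSpace ℝ (Fin 2) | 0 < x 0} =
      {x : EuclideanSpace ℝ (Fin 2) | 0 ≤ x 0} := by
  apply Set.Subset.antisymm
  · apply closure_minimal
    · intro x hx
      show (0:ℝ) ≤ x 0
      exact le_of_lt (show (0:ℝ) < x 0 from hx)
    · exact isClosed_le continuous_const (EuclideanSpace.proj (0 : Fin 2)).continuous
  · intro x hx
    have hseq : Filter.Tendsto
        (fun n : ℕ => x + (1 / (n + 1) : ℝ) • EuclideanSpace.single (0 : Fin 2) (1:ℝ))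
        Filter.atTop (𝓝 x) := by
      have h0 : Filter.Tendsto (fun n : ℕ => (1 / (n + 1) : ℝ)) Filter.atTop (𝓝 0) :=
        tendsto_one_div_add_atTop_nhds_zero_nat
      have := (h0.smul_const (EuclideanSpace.single (0 : Fin 2) (1:ℝ))).const_add x
      simpa using this
    apply mem_closure_of_tendsto hseq
    filter_upwards with n
    show 0 < (x + (1 / (n + 1) : ℝ) • EuclideanSpace.single (0 : Fin 2) (1:ℝ)) 0
    have hc : (x + (1 / (n + 1) : ℝ) • EuclideanSpace.single (0 : Fin 2) (1:ℝ)) 0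
        = x 0 + (1 / (n + 1) : ℝ) := by
      simp [EuclideanSpace.single_apply]
    rw [hc]
    have h1 : (0:ℝ) < 1 / (n + 1) := by positivity
    have h2 : (0:ℝ) ≤ x 0 := hx
    linarith

end AuxLemmas

open Filter Topology

/-- **Failure of the strong comparison principle on the half-plane** -/
theorem halfplane_strong_comparison_fails :
    IsViscositySubsolution {x : EuclideanSpace ℝ (Fin 2) | 0 < x 0}
      (fun _ _ _ => 0) (fun _ => 0) (fun _ => (0:ℝ)) ∧
    IsViscositySupersolution {x : EuclideanSpace ℝ (Fin 2) | 0 < x 0}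
      (fun _ _ _ => 0) (fun _ => 0)
      (fun x => if 0 < x 0 then (0:ℝ) else -1) ∧
    (∀ x₀ ∈ frontier {x : EuclideanSpace ℝ (Fin 2) | 0 < x 0},
      (fun x : EuclideanSpace ℝ (Fin 2) => if 0 < x 0 then (0:ℝ) else -1) x₀
        < (fun _ : EuclideanSpace ℝ (Fin 2) => (0:ℝ)) x₀) ∧
    (∃ x₀ ∈ closure {x : EuclideanSpace ℝ (Fin 2) | 0 < x 0},
      (fun x : EuclideanSpace ℝ (Fin 2) => if 0 < x 0 then (0:ℝ) else -1) x₀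
        < (fun _ : EuclideanSpace ℝ (Fin 2) => (0:ℝ)) x₀) := by
  refine ⟨⟨?_, ?_⟩, ⟨?_, ?_⟩, ?_, ?_⟩
  · -- USC of 0
    exact continuousOn_const.upperSemicontinuousOn
  · -- subsolution property
    intro φ hφ x₀ hx₀ hmax
    by_cases hx : x₀ ∈ {x : EuclideanSpace ℝ (Fin 2) | 0 < x 0}
    · simp only [MALower, if_pos hx]
      have hnhds : 𝓝[closure {x : EuclideanSpace ℝ (Fin 2) | 0 < x 0}] x₀ = 𝓝 x₀ :=
        nhdsWithin_eq_nhds.2 (Filter.mem_of_superset (omega_open.mem_nhds hx) subset_closure)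
      have hmin : IsLocalMin φ x₀ := by
        have h' : ∀ᶠ x in 𝓝 x₀, (0:ℝ) - φ x ≤ 0 - φ x₀ := by
          rw [← hnhds]; exact hmax
        filter_upwards [h'] with z hz
        linarith
      have hpsd := hessian_posSemidef hφ hmin
      rw [detPlus, if_pos hpsd]
      have := psd_det_nonneg hpsd
      linarith
    · simp only [MALower, if_neg hx]
      exact le_trans (min_le_left _ _) (by norm_num)
  · -- LSC of v
    intro x hx
    by_cases hx0 : 0 < x 0
    · intro y hy
      change y < if 0 < x 0 then (0:ℝ) else -1 at hy
      rw [if_pos hx0] at hy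
      filter_upwards [mem_nhdsWithin_of_mem_nhds (omega_open.mem_nhds hx0)] with z hz
      show y < if 0 < z 0 then (0:ℝ) else -1
      rw [if_pos hz]
      exact hy
    · intro y hy
      change y < if 0 < x 0 then (0:ℝ) else -1 at hy
      rw [if_neg hx0] at hy
      filter_upwards with z
      show y < if 0 < z 0 then (0:ℝ) else -1
      by_cases hz : 0 < z 0
      · rw [if_pos hz]; linarith
      · rw [if_neg hz]; exact hy
  · -- supersolution property
    intro φ hφ x₀ hx₀ hmin
    have hdetcase : fderiv ℝ (fderiv ℝ φ) x₀ (EuclideanSpace.single 1 1)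
        (EuclideanSpace.single 1 1) ≤ 0 →
        0 ≤ -detPlus (hessianMatrix φ x₀) := by
      intro hQ
      by_cases hpsd : (hessianMatrix φ x₀).PosSemidef
      · have h11 : hessianMatrix φ x₀ 1 1 ≤ 0 := by
          rw [hessian_apply]; exact hQ
        have hdet := det_nonpos_of_diag hpsd h11
        rw [detPlus, if_pos hpsd]
        linarith
      · rw [detPlus, if_neg hpsd]
        norm_num
    by_cases hx : x₀ ∈ {x : EuclideanSpace ℝ (Fin 2) | 0 < x 0}
    · simp only [MAUpper, if_pos hx]
      have hnhds : 𝓝[closure {x : EuclideanSpace ℝ (Fin 2) | 0 < x 0}] x₀ = 𝓝 x₀ :=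
        nhdsWithin_eq_nhds.2 (Filter.mem_of_superset (omega_open.mem_nhds hx) subset_closure)
      have hmaxφ : IsLocalMax φ x₀ := by
        have h' : ∀ᶠ x in 𝓝 x₀,
            (if 0 < x₀ 0 then (0:ℝ) else -1) - φ x₀ ≤ (if 0 < x 0 then (0:ℝ) else -1) - φ x := by
          rw [← hnhds]; exact hmin
        have hΩ : ∀ᶠ x in 𝓝 x₀, x ∈ {x : EuclideanSpace ℝ (Fin 2) | 0 < x 0} :=
          omega_open.mem_nhds hx
        filter_upwards [h', hΩ] with z hz hzS
        rw [if_pos (show (0:ℝ) < x₀ 0 from hx), if_pos (show (0:ℝ) < z 0 from hzS)] at hz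
        linarith
      have hQ := key_max hφ (EuclideanSpace.single 1 1) (line_max hmaxφ _)
      have := hdetcase hQ
      linarith
    · simp only [MAUpper, if_neg hx]
      have hx0le : 0 ≤ x₀ 0 := by
        rw [omega_closure] at hx₀; exact hx₀
      have hcoord : ∀ t : ℝ, (x₀ + t • EuclideanSpace.single (1 : Fin 2) (1:ℝ)) 0 = x₀ 0 := by
        intro t
        simp [EuclideanSpace.single_apply]
      have hmem : ∀ t : ℝ,
          (x₀ + t • EuclideanSpace.single (1 : Fin 2) (1:ℝ)) ∈
            closure {x : EuclideanSpace ℝ (Fin 2) | 0 < x 0} := by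
        intro t
        rw [omega_closure]
        show 0 ≤ (x₀ + t • EuclideanSpace.single (1 : Fin 2) (1:ℝ)) 0
        rw [hcoord]; exact hx0le
      have hco : ∀ t : ℝ, ¬ (0 < (x₀ + t • EuclideanSpace.single (1 : Fin 2) (1:ℝ)) 0) := by
        intro t
        rw [hcoord]
        exact hx
      have hcont : Continuous (fun t : ℝ => x₀ + t • EuclideanSpace.single (1 : Fin 2) (1:ℝ)) := by
        continuity
      have htt : Filter.Tendsto (fun t : ℝ => x₀ + t • EuclideanSpace.single (1 : Fin 2) (1:ℝ))
          (𝓝 0) (𝓝[closure {x : EuclideanSpace ℝ (Fin 2) | 0 < x 0}] x₀) := by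
        apply tendsto_nhdsWithin_of_tendsto_nhds_of_eventually_within
        · simpa using hcont.tendsto 0
        · exact Filter.Eventually.of_forall hmem
      have hev := htt.eventually hmin
      have hline : IsLocalMax (fun t : ℝ => φ (x₀ + t • EuclideanSpace.single (1 : Fin 2) (1:ℝ))) 0 := by
        filter_upwards [hev] with t ht
        rw [if_neg (show ¬ (0:ℝ) < x₀ 0 from hx), if_neg (hco t)] at ht
        show φ (x₀ + t • EuclideanSpace.single (1 : Fin 2) (1:ℝ)) ≤
          φ (x₀ + (0:ℝ) • EuclideanSpace.single (1 : Fin 2) (1:ℝ))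
        rw [zero_smul, add_zero]
        linarith
      have hQ := key_max hφ (EuclideanSpace.single 1 1) hline
      have := hdetcase hQ
      refine le_trans ?_ (le_max_right _ _)
      linarith
  · -- strict inequality on the frontier
    intro x₀ hx₀
    rw [frontier, omega_open.interior_eq] at hx₀
    have : ¬ (0 < x₀ 0) := hx₀.2
    simp only [if_neg this]
    norm_num
  · -- existence of a point
    refine ⟨0, ?_, ?_⟩
    · rw [omega_closure]
      show (0:ℝ) ≤ (0 : EuclideanSpace ℝ (Fin 2)) 0
      norm_num
    · have : ¬ (0 < (0 : EuclideanSpace ℝ (Fin 2)) 0) := by norm_num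
      simp only [if_neg this]
      norm_num
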